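/- Let k be a domain, A = k_{p_{ij}}[x_1,…,x_n] a skew polynomial ring, and C a commutative domain containing k. Suppose that for every i there exists j with p_{ij} ≠ 1 (no x_i is central). Then for every k-algebra automorphism g of A ⊗_k C, the constant term of g(x_i) is zero for every i. -/

import Mathlib

noncomputable section

/-- The defining relations of the skew polynomial ring `k_{p_{ij}}[x_1, …, x_n]`:
for `i < j`, `x_j * x_i` is identified with `p i j * (x_i * x_j)`. -/
def skewRel (k : Type*) [CommRing k] (n : ℕ) (p : Fin n → Fin n → k) :
    FreeAlgebra k (Fin n) → FreeAlgebra k (Fin n) → Prop := fun a b =>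
  ∃ i j : Fin n, i < j ∧ a = FreeAlgebra.ι k j * FreeAlgebra.ι k i ∧
    b = algebraMap k _ (p i j) * (FreeAlgebra.ι k i * FreeAlgebra.ι k j)

/-- The skew polynomial ring `k_{p_{ij}}[x_1, …, x_n]`. -/
abbrev SkewPoly (k : Type*) [CommRing k] (n : ℕ) (p : Fin n → Fin n → k) :=
  RingQuot (skewRel k n p)

/-- The generator `x_i` of the skew polynomial ring. -/
def SkewPoly.X (k : Type*) [CommRing k] (n : ℕ) (p : Fin n → Fin n → k) (i : Fin n) :
    SkewPoly k n p :=
  RingQuot.mkAlgHom k (skewRel k n p) (FreeAlgebra.ι k i)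
open scoped TensorProduct

/-- The counit of the skew polynomial ring, sending each generator `x_i` to `0`;
it computes the constant term of an element. -/
def SkewPoly.counit (k : Type*) [CommRing k] (n : ℕ) (p : Fin n → Fin n → k) :
    SkewPoly k n p →ₐ[k] k :=
  RingQuot.liftAlgHom k ⟨FreeAlgebra.lift k (fun _ => (0 : k)), by
    rintro x y ⟨i, j, hij, rfl, rfl⟩
    simp⟩

/-- The constant-term map of `A ⊗_k C`, the `k`-algebra map sending each
generator `x_i ⊗ 1` to `0` and `1 ⊗ c` to `c`. -/
def SkewPoly.constantTerm (k : Type*) [CommRing k] (n : ℕ) (p : Fin n → Fin n → k)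
    (C : Type*) [CommRing C] [Algebra k C] :
    (SkewPoly k n p ⊗[k] C) →ₐ[k] C :=
  (Algebra.TensorProduct.lid k C).toAlgHom.comp
    (Algebra.TensorProduct.map (SkewPoly.counit k n p) (AlgHom.id k C))


open Finsupp

namespace SkewAux

variable {k : Type*} [CommRing k] {n : ℕ} (p : Fin n → Fin n → k)
  (C : Type*) [CommRing C] [Algebra k C]

abbrev V := (Fin n →₀ ℕ) →₀ C

def kap (l : Fin n) (e : Fin n →₀ ℕ) : k :=
  ∏ a : Fin n, if a < l then p a l ^ e a else 1

/-- The skew shift operator. -/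
def T (l : Fin n) : Module.End C (V (n := n) C) :=
  Finsupp.lsum C fun d => algebraMap k C (kap p l d) • Finsupp.lsingle (d + Finsupp.single l 1)

lemma T_single (l : Fin n) (d : Fin n →₀ ℕ) (c : C) :
    T p C l (Finsupp.single d c)
      = Finsupp.single (d + Finsupp.single l 1) (algebraMap k C (kap p l d) * c) := by
  rw [T, Finsupp.lsum_single]
  simp only [LinearMap.smul_apply, Finsupp.lsingle_apply, Finsupp.smul_single, smul_eq_mul]


lemma kap_add (l : Fin n) (d e : Fin n →₀ ℕ) :
    kap p l (d + e) = kap p l d * kap p l e := by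
  rw [kap, kap, kap, ← Finset.prod_mul_distrib]
  refine Finset.prod_congr rfl fun a _ => ?_
  by_cases h : a < l <;> simp [h, Finsupp.add_apply, pow_add]

lemma kap_single (i l : Fin n) :
    kap p l (Finsupp.single i 1) = if i < l then p i l else 1 := by
  rw [kap]
  have : ∀ a : Fin n, (if a < l then p a l ^ (Finsupp.single i (1:ℕ)) a else 1)
      = if a = i then (if i < l then p i l else 1) else 1 := by
    intro a
    rcases eq_or_ne a i with rfl | hne
    · simp [Finsupp.single_eq_same]
    · simp [Finsupp.single_apply, (Ne.symm hne : i ≠ a), hne]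
  rw [Finset.prod_congr rfl fun a _ => this a, Finset.prod_ite_eq' Finset.univ i
    (fun _ => if i < l then p i l else 1)]
  simp

lemma kap_eq_one (l : Fin n) (e : Fin n →₀ ℕ) (h : ∀ a, a < l → e a = 0) :
    kap p l e = 1 := by
  rw [kap]
  refine Finset.prod_eq_one fun a _ => ?_
  by_cases ha : a < l
  · simp [h a ha]
  · simp [ha]

/-- The defining commutation relation, on the level of the operators `T`. -/
lemma T_comm {i j : Fin n} (hij : i < j) :
    T p C j * T p C i
      = algebraMap k (Module.End C (V (n := n) C)) (p i j) * (T p C i * T p C j) := by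
  refine Finsupp.lhom_ext fun d c => ?_
  have h1 : kap p j (d + Finsupp.single i 1) = p i j * kap p j d := by
    rw [kap_add, kap_single, if_pos hij]; ring
  have h2 : kap p i (d + Finsupp.single j 1) = kap p i d := by
    rw [kap_add, kap_single, if_neg (by exact fun h => absurd (hij.trans h) (lt_irrefl i))]
    ring
  calc (T p C j * T p C i) (Finsupp.single d c)
      = T p C j (T p C i (Finsupp.single d c)) := rfl
    _ = Finsupp.single (d + Finsupp.single i 1 + Finsupp.single j 1)
          (algebraMap k C (kap p j (d + Finsupp.single i 1))
            * (algebraMap k C (kap p i d) * c)) := by rw [T_single, T_single]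
    _ = Finsupp.single (d + Finsupp.single j 1 + Finsupp.single i 1)
          (algebraMap k C (p i j) * (algebraMap k C (kap p i (d + Finsupp.single j 1))
            * (algebraMap k C (kap p j d) * c))) := by
        rw [h1, h2, map_mul]
        congr 1
        · abel
        · ring
    _ = (algebraMap k (Module.End C (V (n := n) C)) (p i j)
          * (T p C i * T p C j)) (Finsupp.single d c) := by
        rw [Module.End.mul_apply, Module.End.mul_apply, T_single, T_single,
          Module.algebraMap_end_apply, Finsupp.smul_single]
        congr 1
        rw [Algebra.smul_def]


/-- The representation of the skew polynomial ring on `V`. -/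
def rho : SkewPoly k n p →ₐ[k] Module.End C (V (n := n) C) :=
  RingQuot.liftAlgHom k ⟨FreeAlgebra.lift k fun l => T p C l, by
    rintro x y ⟨i, j, hij, rfl, rfl⟩
    simp only [map_mul, FreeAlgebra.lift_ι_apply, AlgHom.commutes]
    exact T_comm p C hij⟩

lemma rho_X (l : Fin n) : rho p C (SkewPoly.X k n p l) = T p C l := by
  rw [SkewPoly.X, rho, RingQuot.liftAlgHom_mkAlgHom_apply, FreeAlgebra.lift_ι_apply]

/-- The representation of `A ⊗[k] C` on `V`. -/
def Phi : (SkewPoly k n p ⊗[k] C) →ₐ[k] Module.End C (V (n := n) C) :=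
  Algebra.TensorProduct.lift (rho p C) (IsScalarTower.toAlgHom k C _)
    (fun a c => (Algebra.commutes c (rho p C a)).symm)

lemma Phi_tmul (a : SkewPoly k n p) (c : C) :
    Phi p C (a ⊗ₜ[k] c) = rho p C a * algebraMap C _ c :=
  Algebra.TensorProduct.lift_tmul _ _ _ _ _

/-- Evaluation of the representation at the vacuum vector. -/
def theta (w : SkewPoly k n p ⊗[k] C) : V (n := n) C :=
  Phi p C w (Finsupp.single 0 1)

lemma theta_add (w w' : SkewPoly k n p ⊗[k] C) :
    theta p C (w + w') = theta p C w + theta p C w' := by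
  rw [theta, theta, theta, map_add, LinearMap.add_apply]

lemma theta_smul (r : k) (w : SkewPoly k n p ⊗[k] C) :
    theta p C (r • w) = r • theta p C w := by
  rw [theta, theta, map_smul, LinearMap.smul_apply]

lemma theta_X_mul (l : Fin n) (w : SkewPoly k n p ⊗[k] C) :
    theta p C ((SkewPoly.X k n p l ⊗ₜ[k] 1) * w) = T p C l (theta p C w) := by
  rw [theta, theta, map_mul, Phi_tmul, map_one, mul_one, rho_X, Module.End.mul_apply]

lemma theta_c_mul (c : C) (w : SkewPoly k n p ⊗[k] C) :
    theta p C (((1 : SkewPoly k n p) ⊗ₜ[k] c) * w) = c • theta p C w := by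
  rw [theta, theta, map_mul, Phi_tmul, map_one, one_mul, Module.End.mul_apply,
    Module.algebraMap_end_apply]


lemma X_mul_X {a l : Fin n} (h : a < l) :
    SkewPoly.X k n p l * SkewPoly.X k n p a
      = p a l • (SkewPoly.X k n p a * SkewPoly.X k n p l) := by
  have : RingQuot.mkAlgHom k (skewRel k n p) (FreeAlgebra.ι k l * FreeAlgebra.ι k a)
      = RingQuot.mkAlgHom k (skewRel k n p)
        (algebraMap k (FreeAlgebra k (Fin n)) (p a l)
          * (FreeAlgebra.ι k a * FreeAlgebra.ι k l)) :=
    RingQuot.mkAlgHom_rel k ⟨a, l, h, rfl, rfl⟩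
  simp only [map_mul] at this
  rw [SkewPoly.X, SkewPoly.X, this, AlgHom.commutes, ← Algebra.smul_def]

lemma X_mul_X_pow {a l : Fin n} (h : a < l) (m : ℕ) :
    SkewPoly.X k n p l * SkewPoly.X k n p a ^ m
      = (p a l ^ m) • (SkewPoly.X k n p a ^ m * SkewPoly.X k n p l) := by
  induction m with
  | zero => simp
  | succ m ih =>
    rw [pow_succ', ← mul_assoc, X_mul_X p h, smul_mul_assoc, mul_assoc, ih, mul_smul_comm,
      smul_smul, ← pow_succ', mul_assoc]

/-- Straightening an `X l` past an ordered product of powers. -/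
lemma straighten (l : Fin n) (L : List (Fin n)) (hL : L.Pairwise (· < ·)) (hl : l ∈ L)
    (e : Fin n →₀ ℕ) :
    SkewPoly.X k n p l * (L.map fun a => SkewPoly.X k n p a ^ e a).prod
      = (L.map fun a => if a < l then p a l ^ e a else 1).prod •
        (L.map fun a => SkewPoly.X k n p a ^ ((e + Finsupp.single l 1 : Fin n →₀ ℕ) a)).prod := by
  induction L with
  | nil => exact absurd hl List.not_mem_nil
  | cons a L' ih =>
    have hpw := (List.pairwise_cons.mp hL)
    rcases eq_or_ne a l with rfl | hne
    · have h1 : (L'.map fun a' => if a' < a then p a' a ^ e a' else 1).prod = 1 := by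
        refine List.prod_eq_one fun x hx => ?_
        obtain ⟨a', ha', rfl⟩ := List.mem_map.mp hx
        rw [if_neg (asymm (hpw.1 a' ha'))]
      have h2 : (L'.map fun a' => SkewPoly.X k n p a' ^ ((e + Finsupp.single a 1 : Fin n →₀ ℕ) a')).prod
          = (L'.map fun a' => SkewPoly.X k n p a' ^ e a').prod := by
        congr 1
        refine List.map_congr_left fun a' ha' => ?_
        have : a ≠ a' := ne_of_lt (hpw.1 a' ha')
        rw [Finsupp.add_apply, Finsupp.single_apply, if_neg this, add_zero]
      rw [List.map_cons, List.map_cons, List.map_cons, List.prod_cons, List.prod_cons,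
        List.prod_cons, h1, h2, if_neg (lt_irrefl a), one_mul, one_smul,
        Finsupp.add_apply, Finsupp.single_eq_same, pow_succ', ← mul_assoc, mul_assoc]
    · have hlL' : l ∈ L' := by
        rcases List.mem_cons.mp hl with h | h
        · exact absurd h.symm hne
        · exact h
      have hal : a < l := hpw.1 l hlL'
      have hea : ((e + Finsupp.single l 1 : Fin n →₀ ℕ) a) = e a := by
        rw [Finsupp.add_apply, Finsupp.single_apply, if_neg hne.symm, add_zero]
      rw [List.map_cons, List.map_cons, List.map_cons, List.prod_cons, List.prod_cons,
        List.prod_cons, ← mul_assoc, X_mul_X_pow p hal, smul_mul_assoc, mul_assoc,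
        ih hpw.2 hlL', mul_smul_comm, ← smul_smul, if_pos hal, hea]

/-- The ordered monomial `x^d`. -/
def Xpow (d : Fin n →₀ ℕ) : SkewPoly k n p :=
  ((List.finRange n).map fun l => SkewPoly.X k n p l ^ d l).prod

lemma X_mul_Xpow (l : Fin n) (e : Fin n →₀ ℕ) :
    SkewPoly.X k n p l * Xpow p e = kap p l e • Xpow p (e + Finsupp.single l 1) := by
  rw [Xpow, Xpow, straighten p l _ (List.pairwise_lt_finRange n) (List.mem_finRange l),
    kap, Fin.prod_univ_def]



lemma single_list_sum_apply (L : List (Fin n)) (d : Fin n →₀ ℕ) (b : Fin n)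
    (h : ∀ x ∈ L, x ≠ b) :
    ((L.map fun l => Finsupp.single l (d l)).sum) b = 0 := by
  induction L with
  | nil => simp
  | cons a L' ih =>
    rw [List.map_cons, List.sum_cons, Finsupp.add_apply, Finsupp.single_apply,
      if_neg (h a List.mem_cons_self), zero_add,
      ih fun x hx => h x (List.mem_cons_of_mem a hx)]

lemma T_pow (l : Fin n) (m : ℕ) (v : Fin n →₀ ℕ) (c : C) (hv : ∀ b, b < l → v b = 0) :
    (T p C l ^ m) (Finsupp.single v c) = Finsupp.single (v + Finsupp.single l m) c := by
  induction m generalizing v with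
  | zero => simp
  | succ m ih =>
    have hv' : ∀ b, b < l → (v + Finsupp.single l 1 : Fin n →₀ ℕ) b = 0 := by
      intro b hb
      rw [Finsupp.add_apply, hv b hb, Finsupp.single_apply, if_neg (ne_of_gt hb), add_zero]
    have hv'' : ∀ b, b < l → (v + Finsupp.single l m : Fin n →₀ ℕ) b = 0 := by
      intro b hb
      rw [Finsupp.add_apply, hv b hb, Finsupp.single_apply, if_neg (ne_of_gt hb), add_zero]
    rw [pow_succ', Module.End.mul_apply, ih _ hv, T_single, kap_eq_one p l _ hv'', map_one,
      one_mul, add_assoc, ← Finsupp.single_add]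

lemma T_prod (L : List (Fin n)) (hL : L.Pairwise (· < ·)) (d : Fin n →₀ ℕ)
    (e : Fin n →₀ ℕ) (c : C) (he : ∀ b x, x ∈ L → e b ≠ 0 → x ≤ b) :
    ((L.map fun l => T p C l ^ d l).prod) (Finsupp.single e c)
      = Finsupp.single (e + (L.map fun l => Finsupp.single l (d l)).sum) c := by
  induction L with
  | nil => simp
  | cons a L' ih =>
    have he' : ∀ b x, x ∈ L' → e b ≠ 0 → x ≤ b :=
      fun b x hx => he b x (List.mem_cons_of_mem a hx)
    rw [List.map_cons, List.prod_cons, Module.End.mul_apply, ih (List.pairwise_cons.mp hL).2 he']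
    have hv : ∀ b, b < a →
        (e + (L'.map fun l => Finsupp.single l (d l)).sum : Fin n →₀ ℕ) b = 0 := by
      intro b hb
      rw [Finsupp.add_apply]
      have h1 : e b = 0 := by
        by_contra hne
        exact absurd (he b a List.mem_cons_self hne) (not_le.mpr hb)
      have h2 : ((L'.map fun l => Finsupp.single l (d l)).sum) b = 0 := by
        refine single_list_sum_apply L' d b fun x hx => ?_
        have := (List.pairwise_cons.mp hL).1 x hx
        exact ne_of_gt (hb.trans this)
      rw [h1, h2, add_zero]
    have heq : e + (L'.map fun l => Finsupp.single l (d l)).sum + Finsupp.single a (d a)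
        = e + (Finsupp.single a (d a) + (L'.map fun l => Finsupp.single l (d l)).sum) := by
      rw [add_assoc, add_comm ((L'.map fun l => Finsupp.single l (d l)).sum)]
    rw [T_pow p C a (d a) _ c hv, heq, List.map_cons, List.sum_cons]


lemma finsupp_sum_finRange (d : Fin n →₀ ℕ) :
    ((List.finRange n).map fun l => Finsupp.single l (d l)).sum = d := by
  ext b
  rw [← Fin.sum_univ_def fun l => Finsupp.single l (d l)]
  rw [Finset.sum_apply' b]
  have : ∀ l : Fin n, (Finsupp.single l (d l)) b = if l = b then d l else 0 :=
    fun l => Finsupp.single_apply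
  rw [Finset.sum_congr rfl fun l _ => this l, Finset.sum_ite_eq' Finset.univ b d,
    if_pos (Finset.mem_univ b)]

lemma rho_Xpow (d : Fin n →₀ ℕ) :
    rho p C (Xpow p d) = ((List.finRange n).map fun l => T p C l ^ d l).prod := by
  rw [Xpow, map_list_prod, List.map_map]
  congr 1
  refine List.map_congr_left fun l _ => ?_
  simp [Function.comp, map_pow, rho_X]

lemma theta_Xpow_tmul (d : Fin n →₀ ℕ) (c : C) :
    theta p C (Xpow p d ⊗ₜ[k] c) = Finsupp.single d c := by
  rw [theta, Phi_tmul, Module.End.mul_apply, Module.algebraMap_end_apply, map_smul, rho_Xpow,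
    T_prod p C _ (List.pairwise_lt_finRange n) d 0 1 (fun b x _ h => absurd rfl h),
    finsupp_sum_finRange, zero_add, Finsupp.smul_single, smul_eq_mul, mul_one]

/-- The linear section of `theta`. -/
def iota : (V (n := n) C) →ₗ[k] SkewPoly k n p ⊗[k] C :=
  Finsupp.lsum k fun d => TensorProduct.mk k (SkewPoly k n p) C (Xpow p d)

lemma iota_single (d : Fin n →₀ ℕ) (c : C) :
    iota p C (Finsupp.single d c) = Xpow p d ⊗ₜ[k] c := by
  rw [iota, Finsupp.lsum_single, TensorProduct.mk_apply]

lemma iota_T (l : Fin n) (v : V (n := n) C) :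
    iota p C (T p C l v) = (SkewPoly.X k n p l ⊗ₜ[k] 1) * iota p C v := by
  induction v using Finsupp.induction_linear with
  | zero => simp
  | add f g hf hg => rw [map_add, map_add, map_add, mul_add, hf, hg]
  | single d c =>
    rw [T_single, iota_single, iota_single, Algebra.TensorProduct.tmul_mul_tmul, one_mul,
      X_mul_Xpow, ← Algebra.smul_def, TensorProduct.tmul_smul, TensorProduct.smul_tmul']

lemma iota_c_smul (c : C) (v : V (n := n) C) :
    iota p C (c • v) = ((1 : SkewPoly k n p) ⊗ₜ[k] c) * iota p C v := by
  induction v using Finsupp.induction_linear with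
  | zero => simp
  | add f g hf hg => rw [smul_add, map_add, map_add, mul_add, hf, hg]
  | single d c' =>
    rw [Finsupp.smul_single, iota_single, iota_single, Algebra.TensorProduct.tmul_mul_tmul,
      one_mul, smul_eq_mul]


lemma Xpow_zero : Xpow p (0 : Fin n →₀ ℕ) = 1 := by
  rw [Xpow]
  refine List.prod_eq_one fun x hx => ?_
  obtain ⟨l, _, rfl⟩ := List.mem_map.mp hx
  rw [Finsupp.coe_zero, Pi.zero_apply, pow_zero]

lemma adjoin_X_eq_top :
    Algebra.adjoin k (Set.range (SkewPoly.X k n p)) = ⊤ := by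
  have : Set.range (SkewPoly.X k n p)
      = RingQuot.mkAlgHom k (skewRel k n p) '' Set.range (FreeAlgebra.ι k) := by
    rw [← Set.range_comp]; rfl
  rw [this, ← AlgHom.map_adjoin, FreeAlgebra.adjoin_range_ι, Algebra.map_top,
    AlgHom.range_eq_top]
  exact RingQuot.mkAlgHom_surjective k (skewRel k n p)

/-- `iota` is a left inverse of `theta`, so `theta` is injective. -/
lemma iota_theta (w : SkewPoly k n p ⊗[k] C) : iota p C (theta p C w) = w := by
  -- the set of `w` for which the statement holds
  let W : Submodule k (SkewPoly k n p ⊗[k] C) :=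
    { carrier := {w | iota p C (theta p C w) = w}
      add_mem' := by
        intro w w' hw hw'
        simp only [Set.mem_setOf_eq] at *
        rw [theta_add, map_add, hw, hw']
      zero_mem' := by
        simp only [Set.mem_setOf_eq, theta, map_zero, LinearMap.zero_apply, map_zero]
      smul_mem' := by
        intro r w hw
        simp only [Set.mem_setOf_eq] at *
        rw [theta_smul, map_smul, hw] }
  have h1c : ∀ c : C, ((1 : SkewPoly k n p) ⊗ₜ[k] c) ∈ W := by
    intro c
    show iota p C (theta p C _) = _
    rw [theta, Phi_tmul, map_one, one_mul, Module.algebraMap_end_apply, Finsupp.smul_single,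
      smul_eq_mul, mul_one, iota_single, Xpow_zero]
  have hXmul : ∀ (l : Fin n), ∀ w ∈ W, (SkewPoly.X k n p l ⊗ₜ[k] (1 : C)) * w ∈ W := by
    intro l w hw
    show iota p C (theta p C _) = _
    rw [theta_X_mul, iota_T, hw]
  have hcmul : ∀ (c : C), ∀ w ∈ W, ((1 : SkewPoly k n p) ⊗ₜ[k] c) * w ∈ W := by
    intro c w hw
    show iota p C (theta p C _) = _
    rw [theta_c_mul, iota_c_smul, hw]
  -- the subalgebra of `a` whose left multiplication preserves `W`
  let S : Subalgebra k (SkewPoly k n p) :=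
    { carrier := {a | ∀ w ∈ W, (a ⊗ₜ[k] (1 : C)) * w ∈ W}
      mul_mem' := by
        intro a b ha hb w hw
        have : (a * b) ⊗ₜ[k] (1 : C) = (a ⊗ₜ[k] (1 : C)) * (b ⊗ₜ[k] (1 : C)) := by
          rw [Algebra.TensorProduct.tmul_mul_tmul, one_mul]
        rw [this, mul_assoc]
        exact ha _ (hb w hw)
      add_mem' := by
        intro a b ha hb w hw
        rw [TensorProduct.add_tmul, add_mul]
        exact W.add_mem (ha w hw) (hb w hw)
      algebraMap_mem' := by
        intro r w hw
        have : (algebraMap k (SkewPoly k n p) r) ⊗ₜ[k] (1 : C)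
            = algebraMap k (SkewPoly k n p ⊗[k] C) r := by
          rw [Algebra.TensorProduct.algebraMap_apply]
        rw [this, ← Algebra.smul_def]
        exact W.smul_mem r hw }
  have hS : S = ⊤ := by
    rw [← top_le_iff, ← adjoin_X_eq_top, Algebra.adjoin_le_iff]
    rintro _ ⟨l, rfl⟩
    exact hXmul l
  have hmem : ∀ (a : SkewPoly k n p) (c : C), a ⊗ₜ[k] c ∈ W := by
    intro a c
    have ha : a ∈ S := hS ▸ Algebra.mem_top
    have : a ⊗ₜ[k] c = (a ⊗ₜ[k] (1 : C)) * ((1 : SkewPoly k n p) ⊗ₜ[k] c) := by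
      rw [Algebra.TensorProduct.tmul_mul_tmul, mul_one, one_mul]
    rw [this]
    exact ha _ (h1c c)
  have : w ∈ W := by
    induction w with
    | zero => exact W.zero_mem
    | tmul a c => exact hmem a c
    | add x y hx hy => exact W.add_mem hx hy
  exact this


lemma skew_hom_ext {B : Type*} [Semiring B] [Algebra k B] {f g : SkewPoly k n p →ₐ[k] B}
    (h : ∀ l, f (SkewPoly.X k n p l) = g (SkewPoly.X k n p l)) : f = g := by
  have h2 : f.comp (RingQuot.mkAlgHom k (skewRel k n p))
      = g.comp (RingQuot.mkAlgHom k (skewRel k n p)) :=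
    FreeAlgebra.hom_ext (funext fun l => h l)
  refine AlgHom.ext fun x => ?_
  obtain ⟨y, rfl⟩ := RingQuot.mkAlgHom_surjective k (skewRel k n p) x
  exact AlgHom.congr_fun h2 y

lemma one_tmul_central (c : C) (w : SkewPoly k n p ⊗[k] C) :
    ((1 : SkewPoly k n p) ⊗ₜ[k] c) * w = w * ((1 : SkewPoly k n p) ⊗ₜ[k] c) := by
  induction w with
  | zero => rw [mul_zero, zero_mul]
  | tmul a c' =>
    rw [Algebra.TensorProduct.tmul_mul_tmul, Algebra.TensorProduct.tmul_mul_tmul, one_mul,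
      mul_one, mul_comm]
  | add x y hx hy => rw [mul_add, add_mul, hx, hy]

lemma commute_C_central {R : Type*} [Ring R] (r : R) (hr : ∀ x, r * x = x * r)
    (q : Polynomial R) : Commute q (Polynomial.C r) := by
  show _ = _
  ext m
  rw [Polynomial.coeff_mul_C, Polynomial.coeff_C_mul, hr]

lemma C_mul_X_mul (R : Type*) [Ring R] (a b : R) :
    (Polynomial.C a * Polynomial.X) * (Polynomial.C b * Polynomial.X)
      = Polynomial.C (a * b) * Polynomial.X ^ 2 := by
  rw [mul_assoc, ← mul_assoc Polynomial.X, Polynomial.X_mul, mul_assoc, ← mul_assoc,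
    ← Polynomial.C_mul, sq]

lemma X_tmul_mul (i j : Fin n) (hij : i < j) :
    (SkewPoly.X k n p j ⊗ₜ[k] (1:C)) * (SkewPoly.X k n p i ⊗ₜ[k] (1:C))
      = p i j • ((SkewPoly.X k n p i ⊗ₜ[k] (1:C)) * (SkewPoly.X k n p j ⊗ₜ[k] (1:C))) := by
  rw [Algebra.TensorProduct.tmul_mul_tmul, Algebra.TensorProduct.tmul_mul_tmul, one_mul,
    X_mul_X p hij, TensorProduct.smul_tmul']

/-- The first factor of the dilation map. -/
def D1 : SkewPoly k n p →ₐ[k] Polynomial (SkewPoly k n p ⊗[k] C) :=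
  RingQuot.liftAlgHom k ⟨FreeAlgebra.lift k fun l =>
    Polynomial.C (SkewPoly.X k n p l ⊗ₜ[k] (1:C)) * Polynomial.X, by
    rintro x y ⟨i, j, hij, rfl, rfl⟩
    simp only [map_mul, FreeAlgebra.lift_ι_apply, AlgHom.commutes]
    have key : ∀ a b : SkewPoly k n p ⊗[k] C,
        (Polynomial.C a * Polynomial.X) * (Polynomial.C b * Polynomial.X)
          = Polynomial.C (a * b) * Polynomial.X ^ 2 := by
      intro a b
      rw [mul_assoc, ← mul_assoc Polynomial.X, Polynomial.X_mul, mul_assoc, ← mul_assoc,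
        ← Polynomial.C_mul, sq]
    rw [key, key, X_tmul_mul p C i j hij, ← Polynomial.smul_C, Algebra.smul_def, mul_assoc]⟩

lemma D1_X (l : Fin n) :
    D1 p C (SkewPoly.X k n p l) = Polynomial.C (SkewPoly.X k n p l ⊗ₜ[k] (1:C))
      * Polynomial.X := by
  rw [SkewPoly.X, D1, RingQuot.liftAlgHom_mkAlgHom_apply, FreeAlgebra.lift_ι_apply]
  rfl

/-- The second factor of the dilation map. -/
def D2 : C →ₐ[k] Polynomial (SkewPoly k n p ⊗[k] C) :=
  (Polynomial.CAlgHom).comp Algebra.TensorProduct.includeRight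

/-- The dilation map, sending `xᵢ ↦ xᵢ t` and `c ↦ c`. -/
def Dm : (SkewPoly k n p ⊗[k] C) →ₐ[k] Polynomial (SkewPoly k n p ⊗[k] C) :=
  Algebra.TensorProduct.lift (D1 p C) (D2 p C) (fun a c => by
    have : D2 p C c = Polynomial.C ((1 : SkewPoly k n p) ⊗ₜ[k] c) := rfl
    rw [this]
    exact commute_C_central _ (fun x => one_tmul_central p C c x) _)

lemma Dm_tmul_left (a : SkewPoly k n p) : Dm p C (a ⊗ₜ[k] (1:C)) = D1 p C a := by
  rw [Dm, Algebra.TensorProduct.lift_tmul, map_one, mul_one]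

lemma Dm_tmul_right (c : C) :
    Dm p C ((1 : SkewPoly k n p) ⊗ₜ[k] c)
      = Polynomial.C ((1 : SkewPoly k n p) ⊗ₜ[k] c) := by
  rw [Dm, Algebra.TensorProduct.lift_tmul, map_one, one_mul]
  rfl

/-- Evaluation of the dilation at `t = 1`. -/
def E1 : Polynomial (SkewPoly k n p ⊗[k] C) →ₐ[k] (SkewPoly k n p ⊗[k] C) :=
  Polynomial.eval₂AlgHom (AlgHom.id k _) 1 (fun a => Commute.one_right a)

lemma E1_Dm (w : SkewPoly k n p ⊗[k] C) : E1 p C (Dm p C w) = w := by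
  have h : (E1 p C).comp (Dm p C) = AlgHom.id k _ := by
    refine Algebra.TensorProduct.ext ?_ ?_
    · refine skew_hom_ext p fun l => ?_
      show E1 p C (Dm p C (SkewPoly.X k n p l ⊗ₜ[k] (1:C))) = SkewPoly.X k n p l ⊗ₜ[k] (1:C)
      rw [Dm_tmul_left, D1_X, map_mul]
      show Polynomial.eval₂ _ 1 _ * Polynomial.eval₂ _ 1 _ = _
      rw [Polynomial.eval₂_C, Polynomial.eval₂_X, mul_one]
      rfl
    · refine AlgHom.ext fun c => ?_
      show E1 p C (Dm p C ((1 : SkewPoly k n p) ⊗ₜ[k] c)) = (1 : SkewPoly k n p) ⊗ₜ[k] c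
      rw [Dm_tmul_right]
      show Polynomial.eval₂ _ 1 _ = _
      rw [Polynomial.eval₂_C]
      rfl
  exact AlgHom.congr_fun h w

lemma counit_X (l : Fin n) : SkewPoly.counit k n p (SkewPoly.X k n p l) = 0 := by
  rw [SkewPoly.counit, SkewPoly.X, RingQuot.liftAlgHom_mkAlgHom_apply, FreeAlgebra.lift_ι_apply]

lemma constantTerm_tmul (a : SkewPoly k n p) (c : C) :
    SkewPoly.constantTerm k n p C (a ⊗ₜ[k] c) = algebraMap k C (SkewPoly.counit k n p a) * c := by
  rw [SkewPoly.constantTerm]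
  simp only [AlgHom.coe_comp, AlgEquiv.toAlgHom_eq_coe, AlgHom.coe_coe, Function.comp_apply,
    Algebra.TensorProduct.map_tmul, AlgHom.coe_id, id_eq, Algebra.TensorProduct.lid_tmul]
  exact Algebra.smul_def _ _

lemma coeff_zero_Dm (w : SkewPoly k n p ⊗[k] C) :
    (Dm p C w).coeff 0 = (1 : SkewPoly k n p) ⊗ₜ[k] (SkewPoly.constantTerm k n p C w) := by
  have h : (Polynomial.eval₂AlgHom (AlgHom.id k (SkewPoly k n p ⊗[k] C)) 0
        (fun a => Commute.zero_right a)).comp (Dm p C)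
      = (Algebra.TensorProduct.includeRight).comp (SkewPoly.constantTerm k n p C) := by
    refine Algebra.TensorProduct.ext ?_ ?_
    · refine skew_hom_ext p fun l => ?_
      show Polynomial.eval₂ _ 0 (Dm p C (SkewPoly.X k n p l ⊗ₜ[k] (1:C))) = _
      rw [Dm_tmul_left, D1_X, Polynomial.eval₂_at_zero]
      rw [Polynomial.coeff_C_mul, Polynomial.coeff_X_zero, mul_zero, map_zero]
      show _ = Algebra.TensorProduct.includeRight
        (SkewPoly.constantTerm k n p C (SkewPoly.X k n p l ⊗ₜ[k] (1:C)))
      rw [constantTerm_tmul, counit_X, map_zero, zero_mul, map_zero]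
    · refine AlgHom.ext fun c => ?_
      show Polynomial.eval₂ _ 0 (Dm p C ((1 : SkewPoly k n p) ⊗ₜ[k] c)) = _
      rw [Dm_tmul_right, Polynomial.eval₂_at_zero, Polynomial.coeff_C]
      show _ = Algebra.TensorProduct.includeRight
        (SkewPoly.constantTerm k n p C ((1 : SkewPoly k n p) ⊗ₜ[k] c))
      rw [constantTerm_tmul, map_one, map_one, one_mul]
      rfl
  have hw := AlgHom.congr_fun h w
  simp only [AlgHom.coe_comp, Function.comp_apply] at hw
  have h2 : Polynomial.eval₂AlgHom (AlgHom.id k (SkewPoly k n p ⊗[k] C)) 0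
      (fun a => Commute.zero_right a) (Dm p C w) = (Dm p C w).coeff 0 := by
    show Polynomial.eval₂ _ 0 _ = _
    rw [Polynomial.eval₂_at_zero]
    rfl
  rw [← h2, hw, Algebra.TensorProduct.includeRight_apply]

lemma theta_X_tmul_one (l : Fin n) :
    theta p C (SkewPoly.X k n p l ⊗ₜ[k] (1:C))
      = Finsupp.single (Finsupp.single l 1) (1 : C) := by
  rw [theta, Phi_tmul, map_one, mul_one, rho_X, T_single, kap_eq_one p l 0 (fun _ _ => rfl),
    map_one, one_mul, zero_add]

end SkewAux


/-- Let `k` be a domain, `A = k_{p_{ij}}[x_1, …, x_n]` with no `x_i`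
central, and `C` a commutative domain containing `k`.  Then for every `k`-algebra
automorphism `g` of `A ⊗_k C`, the constant term of `g (x_i ⊗ 1)` is zero for all `i`. -/
theorem constant_term_of_automorphism_vanishes
    (k : Type*) [CommRing k] [IsDomain k] (n : ℕ) (p : Fin n → Fin n → k)
    (hanti : ∀ i j, p i j * p j i = 1) (hdiag : ∀ i, p i i = 1)
    (hnc : ∀ i, ∃ j, p i j ≠ 1)
    (C : Type*) [CommRing C] [IsDomain C] [Algebra k C]
    (hinj : Function.Injective (algebraMap k C))
    (g : (SkewPoly k n p ⊗[k] C) ≃ₐ[k] (SkewPoly k n p ⊗[k] C)) (i : Fin n) :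
    SkewPoly.constantTerm k n p C (g (SkewPoly.X k n p i ⊗ₜ[k] (1 : C))) = 0 := by
  classical
  obtain ⟨j, hpij⟩ := hnc i
  set ε := SkewPoly.constantTerm k n p C with hε
  set Xi := SkewPoly.X k n p i ⊗ₜ[k] (1:C) with hXi
  set Xj := SkewPoly.X k n p j ⊗ₜ[k] (1:C) with hXj
  have hij : i ≠ j := by rintro rfl; exact hpij (hdiag i)
  have hrelT : Xj * Xi = p i j • (Xi * Xj) := by
    rcases lt_or_gt_of_ne hij with h | h
    · exact SkewAux.X_tmul_mul p C i j h
    · have h2 := SkewAux.X_tmul_mul p C j i h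
      rw [h2, smul_smul, hanti i j, one_smul]
  set y := g Xi with hy
  set z := g Xj with hz
  have hrelg : z * y = p i j • (y * z) := by
    rw [hy, hz, ← map_mul, ← map_mul, hrelT, map_smul]
  set c := ε y with hcdef
  show c = 0
  by_contra hc
  have hq : algebraMap k C (p i j) ≠ 1 := by
    intro h
    exact hpij (hinj (h.trans (map_one (algebraMap k C)).symm))
  have hq' : (1 : C) - algebraMap k C (p i j) ≠ 0 := by
    intro h
    exact hq (sub_eq_zero.mp h).symm
  have hd : ε z = 0 := by
    have h1 : ε z * c = algebraMap k C (p i j) * (c * ε z) := by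
      have h0 := congrArg ε hrelg
      simp only [map_mul, map_smul, Algebra.smul_def] at h0
      exact h0
    have h2 : ((1 : C) - algebraMap k C (p i j)) * (c * ε z) = 0 := by ring_nf; linear_combination h1
    rcases mul_eq_zero.mp h2 with h | h
    · exact absurd h hq'
    · rcases mul_eq_zero.mp h with h' | h'
      · exact absurd h' hc
      · exact h'
  set w := SkewAux.Dm p C z with hw
  set P := SkewAux.Dm p C y with hP
  have hP0 : P.coeff 0 = (1 : SkewPoly k n p) ⊗ₜ[k] c := SkewAux.coeff_zero_Dm p C y
  have hw0 : w.coeff 0 = 0 := by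
    rw [hw, SkewAux.coeff_zero_Dm p C z, hd, TensorProduct.tmul_zero]
  have hrelD : w * P = p i j • (P * w) := by
    rw [hw, hP, ← map_mul, hrelg, map_smul, map_mul]
  have hcoeff : ∀ m, w.coeff m = 0 := by
    intro m
    induction m using Nat.strong_induction_on with
    | _ m IH =>
    have hLHS : (w * P).coeff m = w.coeff m * ((1 : SkewPoly k n p) ⊗ₜ[k] c) := by
      rw [Polynomial.coeff_mul, Finset.sum_eq_single (m, 0)]
      · rw [hP0]
      · rintro ⟨a, b⟩ hab hne
        have hab' : a + b = m := Finset.HasAntidiagonal.mem_antidiagonal.mp hab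
        have ha : a < m := by
          rcases Nat.lt_or_ge a m with h | h
          · exact h
          · exfalso
            have : a = m := le_antisymm (hab' ▸ Nat.le_add_right a b) h
            subst this
            exact hne (by simpa using hab')
        rw [IH a ha, zero_mul]
      · intro h
        exact absurd (Finset.HasAntidiagonal.mem_antidiagonal.mpr (by simp)) h
    have hRHS : (P * w).coeff m = ((1 : SkewPoly k n p) ⊗ₜ[k] c) * w.coeff m := by
      rw [Polynomial.coeff_mul, Finset.sum_eq_single (0, m)]
      · rw [hP0]
      · rintro ⟨a, b⟩ hab hne
        have hab' : a + b = m := Finset.HasAntidiagonal.mem_antidiagonal.mp hab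
        have hb : b < m := by
          rcases Nat.lt_or_ge b m with h | h
          · exact h
          · exfalso
            have : b = m := le_antisymm (hab' ▸ Nat.le_add_left b a) h
            subst this
            exact hne (by simpa using hab')
        rw [IH b hb, mul_zero]
      · intro h
        exact absurd (Finset.HasAntidiagonal.mem_antidiagonal.mpr (by simp)) h
    have hcm : (w * P).coeff m = (p i j • (P * w)).coeff m :=
      congrArg (fun q => Polynomial.coeff q m) hrelD
    rw [hLHS, Polynomial.coeff_smul, hRHS,
      ← SkewAux.one_tmul_central p C c (w.coeff m)] at hcm
    have hth := congrArg (SkewAux.theta p C) hcm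
    rw [SkewAux.theta_c_mul, SkewAux.theta_smul, SkewAux.theta_c_mul] at hth
    have h1 : (c - algebraMap k C (p i j) * c) • SkewAux.theta p C (w.coeff m) = 0 := by
      rw [sub_smul, mul_smul, algebraMap_smul, ← hth, sub_self]
    have hc' : c - algebraMap k C (p i j) * c ≠ 0 := by
      intro h
      have h2 : c * ((1:C) - algebraMap k C (p i j)) = 0 := by ring_nf; linear_combination h
      rcases mul_eq_zero.mp h2 with h' | h'
      · exact hc h'
      · exact hq' h'
    have h2 : SkewAux.theta p C (w.coeff m) = 0 :=
      (smul_eq_zero.mp h1).resolve_left hc'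
    have h3 := congrArg (SkewAux.iota p C) h2
    rw [SkewAux.iota_theta, map_zero] at h3
    exact h3
  have hwz : w = 0 := Polynomial.ext fun m => by rw [hcoeff m, Polynomial.coeff_zero]
  have hz0 : z = 0 := by
    rw [← SkewAux.E1_Dm p C z, ← hw, hwz, map_zero]
  have hXj0 : Xj = 0 := g.injective (by rw [← hz, hz0, map_zero])
  have hth := SkewAux.theta_X_tmul_one p C j
  rw [← hXj, hXj0, SkewAux.theta, map_zero, LinearMap.zero_apply] at hth
  exact one_ne_zero (Finsupp.single_eq_zero.mp hth.symm)
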